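/- If a feasible CVRP solution exists, then there exists a feasible CVRP solution of minimum cost in which every customer appears exactly once across all routes; in particular, every route in that solution is elementary. -/

import Mathlib

noncomputable section

/-- Sum of `c` over consecutive pairs of a list. -/
def pathCost {X : Type*} (c : X → X → ℝ) : List X → ℝ
  | [] => 0
  | [_] => 0
  | a :: b :: rest => c a b + pathCost c (b :: rest)

/-- Route cost: depot to first customer, consecutive legs, last customer back to depot. -/
def routeCost {X : Type*} [MetricSpace X] (o : X) (p : List X) : ℝ :=
  pathCost dist (o :: (p ++ [o]))

/-- A route: a nonempty list of customers of `N` whose total demand is at most `d0`. -/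
def IsRoute {X : Type*} (N : Finset X) (d : X → ℕ) (d0 : ℕ) (l : List X) : Prop :=
  l ≠ [] ∧ (∀ u ∈ l, u ∈ N) ∧ (l.map d).sum ≤ d0

/-- A feasible CVRP solution: at most `K` routes, covering every customer of `N`. -/
def IsFeasibleSol {X : Type*} (N : Finset X) (d : X → ℕ) (d0 K : ℕ)
    (L : List (List X)) : Prop :=
  (∀ l ∈ L, IsRoute N d d0 l) ∧ L.length ≤ K ∧ ∀ u ∈ N, ∃ l ∈ L, u ∈ l

/-- Cost of a CVRP solution: the sum of the route costs. -/
def solCost {X : Type*} [MetricSpace X] (o : X) (L : List (List X)) : ℝ :=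
  (L.map (routeCost o)).sum

set_option linter.unusedSectionVars false

section Aux

variable {X : Type*} [MetricSpace X]

lemma pathCost_nonneg : ∀ l : List X, 0 ≤ pathCost dist l
  | [] => le_refl 0
  | [_] => le_refl 0
  | a :: b :: rest => by
      have := pathCost_nonneg (b :: rest)
      simp only [pathCost]
      positivity

lemma pathCost_cons_le (a x : X) : ∀ l : List X, l ≠ [] →
    pathCost dist (a :: l) ≤ dist a x + pathCost dist (x :: l)
  | [], h => absurd rfl h
  | c :: rest, _ => by
      simp only [pathCost]
      have h := dist_triangle a x c
      linarith

lemma pathCost_sublist (a b : X) : ∀ {s t : List X}, s.Sublist t →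
    pathCost dist (a :: (s ++ [b])) ≤ pathCost dist (a :: (t ++ [b])) := by
  intro s t h
  induction h generalizing a with
  | slnil => exact le_refl _
  | cons x h ih =>
      calc pathCost dist (a :: (_ ++ [b])) ≤ pathCost dist (a :: (_ ++ [b])) := ih a
        _ ≤ _ := by
          rw [List.cons_append]
          exact pathCost_cons_le a x _ (by simp)
  | cons_cons x h ih =>
      simp only [List.cons_append, pathCost, List.append_eq]
      have h2 := ih x
      linarith

lemma routeCost_nonneg (o : X) (l : List X) : 0 ≤ routeCost o l :=
  pathCost_nonneg _

lemma routeCost_mono (o : X) {s t : List X} (h : s.Sublist t) :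
    routeCost o s ≤ routeCost o t :=
  pathCost_sublist o o h

variable [DecidableEq X]

def prune (s : Finset X) : List (List X) → List (List X)
  | [] => []
  | l :: L =>
    let l' := l.dedup.filter (fun x => decide (x ∉ s))
    if l' = [] then prune s L
    else l' :: prune (s ∪ l'.toFinset) L

lemma prune_length (s : Finset X) : ∀ L : List (List X), (prune s L).length ≤ L.length := by
  intro L
  induction L generalizing s with
  | nil => simp [prune]
  | cons l L ih =>
      simp only [prune]
      split
      · exact (ih s).trans (by simp)
      · simpa using ih _

lemma prune_routes (s : Finset X) (L : List (List X)) :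
    ∀ l' ∈ prune s L, l' ≠ [] ∧ l'.Nodup ∧ ∃ l ∈ L, l'.Sublist l := by
  induction L generalizing s with
  | nil => simp [prune]
  | cons l L ih =>
      simp only [prune]
      split
      · intro l' hl'
        obtain ⟨h1, h2, l₀, h3, h4⟩ := ih s l' hl'
        exact ⟨h1, h2, l₀, List.mem_cons_of_mem _ h3, h4⟩
      · rename_i hne
        intro l' hl'
        rcases List.mem_cons.1 hl' with h | h
        · subst h
          refine ⟨hne, (l.nodup_dedup).filter _, l, List.mem_cons_self,
            (List.filter_sublist).trans l.dedup_sublist⟩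
        · obtain ⟨h1, h2, l₀, h3, h4⟩ := ih _ l' h
          exact ⟨h1, h2, l₀, List.mem_cons_of_mem _ h3, h4⟩

lemma prune_cost (o : X) (s : Finset X) (L : List (List X)) :
    solCost o (prune s L) ≤ solCost o L := by
  induction L generalizing s with
  | nil => simp [prune, solCost]
  | cons l L ih =>
      simp only [prune]
      split
      · calc solCost o (prune s L) ≤ solCost o L := ih s
          _ ≤ solCost o (l :: L) := by
            simp only [solCost, List.map_cons, List.sum_cons]
            have := routeCost_nonneg o l
            linarith
      · simp only [solCost, List.map_cons, List.sum_cons]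
        have h1 : routeCost o (l.dedup.filter (fun x => decide (x ∉ s))) ≤ routeCost o l :=
          routeCost_mono o ((List.filter_sublist).trans l.dedup_sublist)
        have h2 := ih (s ∪ (l.dedup.filter (fun x => decide (x ∉ s))).toFinset)
        simp only [solCost] at h2
        linarith

lemma prune_count (s : Finset X) (L : List (List X)) (u : X) :
    (prune s L).flatten.count u = if u ∉ s ∧ ∃ l ∈ L, u ∈ l then 1 else 0 := by
  classical
  induction L generalizing s with
  | nil => simp [prune]
  | cons l L ih =>
      simp only [prune]
      set l' := l.dedup.filter (fun x => decide (x ∉ s)) with hl'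
      have hmem : ∀ x, x ∈ l' ↔ x ∈ l ∧ x ∉ s := by
        intro x
        simp [hl', List.mem_filter, List.mem_dedup]
      split
      · rename_i he
        rw [ih s]
        have himp : ∀ x, x ∈ l → x ∈ s := by
          intro x hx
          by_contra hxs
          exact (List.ne_nil_of_mem ((hmem x).2 ⟨hx, hxs⟩)) he
        congr 1
        apply propext
        constructor
        · rintro ⟨h1, l₀, h2, h3⟩
          exact ⟨h1, l₀, List.mem_cons_of_mem _ h2, h3⟩
        · rintro ⟨h1, l₀, h2, h3⟩
          rcases List.mem_cons.1 h2 with rfl | h2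
          · exact absurd (himp u h3) h1
          · exact ⟨h1, l₀, h2, h3⟩
      · rename_i he
        rw [List.flatten_cons, List.count_append, ih]
        have hnodup : l'.Nodup := (l.nodup_dedup).filter _
        by_cases hus : u ∈ s
        · have h1 : l'.count u = 0 := by
            rw [List.count_eq_zero]
            intro hu
            exact ((hmem u).1 hu).2 hus
          have c1 : ¬(u ∉ s ∪ l'.toFinset ∧ ∃ l₀ ∈ L, u ∈ l₀) :=
            fun h => h.1 (Finset.mem_union_left _ hus)
          have c2 : ¬(u ∉ s ∧ ∃ l₀ ∈ l :: L, u ∈ l₀) := fun h => h.1 hus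
          rw [h1, if_neg c1, if_neg c2]
        · by_cases hul : u ∈ l
          · have hul' : u ∈ l' := (hmem u).2 ⟨hul, hus⟩
            have h1 : l'.count u = 1 := List.count_eq_one_of_mem hnodup hul'
            have h2 : u ∈ s ∪ l'.toFinset := by simp [hul']
            rw [h1]
            simp only [h2, not_true_eq_false, false_and, if_false]
            have c2 : u ∉ s ∧ ∃ l₀ ∈ l :: L, u ∈ l₀ := ⟨hus, l, List.mem_cons_self, hul⟩
            rw [if_pos c2]
          · have h1 : l'.count u = 0 := by
              rw [List.count_eq_zero]
              intro hu
              exact hul ((hmem u).1 hu).1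
            have h2 : u ∉ s ∪ l'.toFinset := by
              simp only [Finset.mem_union, List.mem_toFinset]
              rintro (h | h)
              · exact hus h
              · exact hul ((hmem u).1 h).1
            rw [h1]
            have heq : (u ∉ s ∪ l'.toFinset ∧ ∃ l₀ ∈ L, u ∈ l₀) ↔
                (u ∉ s ∧ ∃ l₀ ∈ l :: L, u ∈ l₀) := by
              constructor
              · rintro ⟨_, l₀, hh, hh2⟩
                exact ⟨hus, l₀, List.mem_cons_of_mem _ hh, hh2⟩
              · rintro ⟨_, l₀, hh, hh2⟩
                rcases List.mem_cons.1 hh with rfl | hh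
                · exact absurd hh2 hul
                · exact ⟨h2, l₀, hh, hh2⟩
            rw [if_congr heq rfl rfl]
            ring

lemma finite_lists {α : Type*} {s : Set α} (hs : s.Finite) :
    ∀ n : ℕ, {l : List α | l.length ≤ n ∧ ∀ x ∈ l, x ∈ s}.Finite := by
  intro n
  induction n with
  | zero =>
      apply Set.Finite.subset (Set.finite_singleton ([] : List α))
      rintro l ⟨h1, _⟩
      simp [List.length_eq_zero_iff.1 (Nat.le_zero.1 h1)]
  | succ n ih =>
      apply Set.Finite.subset
        (Set.Finite.union (Set.finite_singleton ([] : List α))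
          (Set.Finite.image (fun p : α × List α => p.1 :: p.2)
            (hs.prod ih)))
      rintro l ⟨h1, h2⟩
      cases l with
      | nil => exact Or.inl rfl
      | cons a l =>
          right
          exact ⟨(a, l), ⟨h2 a (List.mem_cons_self),
            Nat.succ_le_succ_iff.1 h1, fun x hx => h2 x (List.mem_cons_of_mem _ hx)⟩, rfl⟩


lemma prune_feasible {N : Finset X} {d : X → ℕ} {d0 K : ℕ} {L : List (List X)}
    (hL : IsFeasibleSol N d d0 K L) :
    IsFeasibleSol N d d0 K (prune ∅ L) ∧
      (∀ u ∈ N, (prune ∅ L).flatten.count u = 1) ∧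
      (∀ l ∈ prune ∅ L, l.Nodup) ∧ ∀ o : X, solCost o (prune ∅ L) ≤ solCost o L := by
  have hcount : ∀ u ∈ N, (prune ∅ L).flatten.count u = 1 := by
    intro u hu
    rw [prune_count]
    simp only [Finset.notMem_empty, not_false_iff, true_and]
    rw [if_pos (hL.2.2 u hu)]
  refine ⟨⟨?_, (prune_length ∅ L).trans hL.2.1, ?_⟩, hcount, ?_, fun o => prune_cost o ∅ L⟩
  · intro l' hl'
    obtain ⟨h1, _, l, hlL, hsub⟩ := prune_routes ∅ L l' hl'
    obtain ⟨_, hmem, hdem⟩ := hL.1 l hlL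
    refine ⟨h1, fun u hu => hmem u (hsub.mem hu), le_trans ?_ hdem⟩
    exact (hsub.map d).sum_le_sum (by simp)
  · intro u hu
    have : u ∈ (prune ∅ L).flatten := by
      rw [← List.count_pos_iff, hcount u hu]
      norm_num
    exact List.mem_flatten.1 this
  · intro l hl
    exact (prune_routes ∅ L l hl).2.1

end Aux

/-- If a feasible CVRP solution exists, then there is a feasible solution of minimum cost in
which every customer appears exactly once across all routes; in particular, every route of
that solution is elementary. -/
theorem exists_optimal_elementary_solution {X : Type*} [MetricSpace X] [DecidableEq X]
    (o : X) (N : Finset X) (d : X → ℕ) (hd : ∀ u ∈ N, 1 ≤ d u) (d0 K : ℕ)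
    (hfeas : ∃ L : List (List X), IsFeasibleSol N d d0 K L) :
    ∃ L : List (List X), IsFeasibleSol N d d0 K L ∧
      (∀ L' : List (List X), IsFeasibleSol N d d0 K L' → solCost o L ≤ solCost o L') ∧
      (∀ u ∈ N, L.flatten.count u = 1) ∧
      (∀ l ∈ L, l.Nodup) := by
  classical
  obtain ⟨L0, hL0⟩ := hfeas
  set T : Set (List (List X)) := {L | IsFeasibleSol N d d0 K L ∧
    (∀ u ∈ N, L.flatten.count u = 1) ∧ ∀ l ∈ L, l.Nodup} with hT
  have hT0 : prune ∅ L0 ∈ T := by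
    obtain ⟨a, b, c, _⟩ := prune_feasible hL0
    exact ⟨a, b, c⟩
  have hTfin : T.Finite := by
    have hA : {l : List X | l.length ≤ N.card ∧ ∀ x ∈ l, x ∈ (N : Set X)}.Finite :=
      finite_lists N.finite_toSet N.card
    apply (finite_lists hA K).subset
    rintro L ⟨⟨hroutes, hlen, _⟩, _, hnd⟩
    refine ⟨hlen, fun l hl => ⟨?_, fun x hx => (hroutes l hl).2.1 x hx⟩⟩
    have hsub : l.toFinset ⊆ N := fun x hx => (hroutes l hl).2.1 x (List.mem_toFinset.1 hx)
    calc l.length = l.toFinset.card := (List.toFinset_card_of_nodup (hnd l hl)).symm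
      _ ≤ N.card := Finset.card_le_card hsub
  obtain ⟨L, hLT, hmin⟩ := Set.exists_min_image T (solCost o) hTfin ⟨_, hT0⟩
  refine ⟨L, hLT.1, ?_, hLT.2.1, hLT.2.2⟩
  intro L' hL'
  obtain ⟨a, b, c, hcost⟩ := prune_feasible hL'
  exact (hmin _ ⟨a, b, c⟩).trans (hcost o)
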